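/- For each n, let (X^{(n)}_1,Y^{(n)}_1),…,(X^{(n)}_{m_n},Y^{(n)}_{m_n}) be random variables with values in {0,…,n} × [0,1], with averaged distribution P_n(A) = (1/m_n)∑_{k=1}^{m_n} P((X^{(n)}_k,Y^{(n)}_k) ∈ A). Fix integers r,s ≥ 0. If P_n → P weakly and (P_n)_rs → (P)_rs < ∞ as n → ∞, then the cross moments satisfy μ^{(n)}_{10,rs} = o(m_n (n)_r^{−1}) and (P_n)_{10,rs} = o(n), where μ^{(n)}_{10,rs} = ∑_{k=1}^{m_n} (E[X^{(n)}_k]/n)·(E[(X^{(n)}_k)_r (Y^{(n)}_k)^s]/(n)_r) and (P_n)_{10,rs} = ∫ x·(x)_r y^s P_n(dx,dy). -/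

import Mathlib

open MeasureTheory Filter
open scoped ENNReal Topology

noncomputable section

/-- A layer type distribution is valid for `n` nodes if it is a probability measure
concentrated on `{0, …, n} × [0, 1]`. -/
def ValidTypes (n : ℕ) (p : Measure (ℕ × ℝ)) : Prop :=
  IsProbabilityMeasure p ∧ p {ty : ℕ × ℝ | ty.1 ≤ n ∧ 0 ≤ ty.2 ∧ ty.2 ≤ 1}ᶜ = 0

/-- The averaged layer type distribution `P_n`. -/
def avgMeasure {m : ℕ} (p : Fin m → Measure (ℕ × ℝ)) : Measure (ℕ × ℝ) :=
  ((m : ℝ≥0∞))⁻¹ • ∑ k, p k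

/-- The cross-factorial moment `(P)_{rs} = ∫ (x)_r y^s P(dx,dy)`. -/
def crossMoment (P : Measure (ℕ × ℝ)) (r s : ℕ) : ℝ :=
  ∫ ty, (ty.1.descFactorial r : ℝ) * ty.2 ^ s ∂P

/-- Weak convergence of measures on `ℕ × ℝ`, tested against bounded continuous
functions. -/
def WeakConvNR (Pn : ℕ → Measure (ℕ × ℝ)) (P : Measure (ℕ × ℝ)) : Prop :=
  ∀ φ : ℕ × ℝ → ℝ, Continuous φ → (∃ C, ∀ z, |φ z| ≤ C) →
    Tendsto (fun n => ∫ z, φ z ∂(Pn n)) atTop (𝓝 (∫ z, φ z ∂P))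

namespace CMNeg

def W (r s : ℕ) (z : ℕ × ℝ) : ℝ := (z.1.descFactorial r : ℝ) * z.2 ^ s
def headW (r s K : ℕ) (z : ℕ × ℝ) : ℝ :=
  (if z.1 ≤ K then (z.1.descFactorial r : ℝ) else 0) * z.2 ^ s
def tailW (r s K : ℕ) (z : ℕ × ℝ) : ℝ :=
  (if K < z.1 then (z.1.descFactorial r : ℝ) else 0) * z.2 ^ s
def phiK (r s K : ℕ) (z : ℕ × ℝ) : ℝ :=
  (if z.1 ≤ K then (z.1.descFactorial r : ℝ) else 0) * (min (max z.2 0) 1) ^ s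
def chi (L : ℕ) (z : ℕ × ℝ) : ℝ := if L < z.1 then 1 else 0
def psi (z : ℕ × ℝ) : ℝ := min (max (max (-z.2) (z.2 - 1)) 0) 1

lemma cont_fst (f : ℕ → ℝ) : Continuous (fun z : ℕ × ℝ => f z.1) :=
  (continuous_of_discreteTopology).comp continuous_fst

lemma contW (r s : ℕ) : Continuous (W r s) :=
  (cont_fst (fun x => (x.descFactorial r : ℝ))).mul
    ((continuous_pow s).comp continuous_snd)

lemma cont_headW (r s K : ℕ) : Continuous (headW r s K) :=
  (cont_fst (fun x => if x ≤ K then (x.descFactorial r : ℝ) else 0)).mul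
    ((continuous_pow s).comp continuous_snd)

lemma cont_tailW (r s K : ℕ) : Continuous (tailW r s K) :=
  (cont_fst (fun x => if K < x then (x.descFactorial r : ℝ) else 0)).mul
    ((continuous_pow s).comp continuous_snd)

lemma cont_phiK (r s K : ℕ) : Continuous (phiK r s K) :=
  (cont_fst (fun x => if x ≤ K then (x.descFactorial r : ℝ) else 0)).mul
    ((continuous_pow s).comp (((continuous_snd.max continuous_const).min continuous_const)))

lemma cont_chi (L : ℕ) : Continuous (chi L) := cont_fst (fun x => if L < x then (1:ℝ) else 0)

lemma cont_psi : Continuous psi :=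
  (((continuous_snd.neg.max (continuous_snd.sub continuous_const)).max
    continuous_const).min continuous_const)

lemma W_split (r s K : ℕ) (z : ℕ × ℝ) : W r s z = headW r s K z + tailW r s K z := by
  unfold W headW tailW
  rcases le_or_gt z.1 K with h | h
  · rw [if_pos h, if_neg (not_lt.mpr h)]; ring
  · rw [if_neg (not_le.mpr h), if_pos h]; ring

lemma descFactorial_le (x n r : ℕ) (h : x ≤ n) : (x.descFactorial r : ℝ) ≤ (n : ℝ) ^ r := by
  calc (x.descFactorial r : ℝ) ≤ ((x ^ r : ℕ) : ℝ) := by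
        exact_mod_cast Nat.descFactorial_le_pow x r
    _ ≤ (n : ℝ) ^ r := by
        push_cast
        exact pow_le_pow_left₀ (by positivity) (by exact_mod_cast h) r

lemma pow_mem_01 (y : ℝ) (s : ℕ) (h0 : 0 ≤ y) (h1 : y ≤ 1) : y ^ s ≤ 1 :=
  pow_le_one₀ h0 h1

lemma phiK_bound (r s K : ℕ) (z : ℕ × ℝ) : |phiK r s K z| ≤ (K : ℝ) ^ r := by
  unfold phiK
  rw [abs_mul]
  have h1 : |if z.1 ≤ K then (z.1.descFactorial r : ℝ) else 0| ≤ (K : ℝ) ^ r := by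
    split_ifs with h
    · rw [abs_of_nonneg (by positivity)]; exact descFactorial_le _ _ _ h
    · simpa using by positivity
  have h2 : |(min (max z.2 0) 1) ^ s| ≤ 1 := by
    rw [abs_pow]
    apply pow_le_one₀ (abs_nonneg _)
    rw [abs_of_nonneg (le_min (le_max_right _ _) zero_le_one)]
    exact min_le_right _ _
  calc |if z.1 ≤ K then (z.1.descFactorial r : ℝ) else 0| * |(min (max z.2 0) 1) ^ s|
      ≤ (K : ℝ) ^ r * 1 := by
        apply mul_le_mul h1 h2 (abs_nonneg _) (by positivity)
    _ = (K : ℝ) ^ r := mul_one _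

lemma phiK_eq (r s K : ℕ) (z : ℕ × ℝ) (h0 : 0 ≤ z.2) (h1 : z.2 ≤ 1) :
    phiK r s K z = headW r s K z := by
  unfold phiK headW
  rw [max_eq_left h0, min_eq_left h1]

lemma headW_bound (r s K : ℕ) (z : ℕ × ℝ) (h0 : 0 ≤ z.2) (h1 : z.2 ≤ 1) :
    headW r s K z ≤ (K : ℝ) ^ r := by
  unfold headW
  split_ifs with h
  · calc (z.1.descFactorial r : ℝ) * z.2 ^ s ≤ (K:ℝ)^r * 1 :=
        mul_le_mul (descFactorial_le _ _ _ h) (pow_le_one₀ h0 h1) (by positivity) (by positivity)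
      _ = (K:ℝ)^r := mul_one _
  · simpa using by positivity

lemma headW_nonneg (r s K : ℕ) (z : ℕ × ℝ) (h0 : 0 ≤ z.2) : 0 ≤ headW r s K z := by
  unfold headW; split_ifs <;> positivity

lemma tailW_nonneg (r s K : ℕ) (z : ℕ × ℝ) (h0 : 0 ≤ z.2) : 0 ≤ tailW r s K z := by
  unfold tailW; split_ifs <;> positivity

lemma W_nonneg (r s : ℕ) (z : ℕ × ℝ) (h0 : 0 ≤ z.2) : 0 ≤ W r s z := by
  unfold W; positivity

lemma tailW_abs_le (r s K : ℕ) (z : ℕ × ℝ) : ‖tailW r s K z‖ ≤ ‖W r s z‖ := by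
  unfold tailW W
  rw [Real.norm_eq_abs, Real.norm_eq_abs, abs_mul, abs_mul]
  apply mul_le_mul_of_nonneg_right _ (abs_nonneg _)
  split_ifs
  · exact le_refl _
  · simp

lemma W_bound (r s n : ℕ) (z : ℕ × ℝ) (hx : z.1 ≤ n) (h0 : 0 ≤ z.2) (h1 : z.2 ≤ 1) :
    ‖W r s z‖ ≤ (n : ℝ) ^ r := by
  unfold W
  rw [Real.norm_eq_abs, abs_of_nonneg (by positivity)]
  calc (z.1.descFactorial r : ℝ) * z.2 ^ s ≤ (n:ℝ)^r * 1 :=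
      mul_le_mul (descFactorial_le _ _ _ hx) (pow_le_one₀ h0 h1) (by positivity) (by positivity)
    _ = _ := mul_one _

lemma psi_nonneg (z : ℕ × ℝ) : 0 ≤ psi z :=
  le_min (le_max_right _ _) zero_le_one

lemma psi_le_one (z : ℕ × ℝ) : psi z ≤ 1 := min_le_right _ _

lemma psi_eq_zero_iff (z : ℕ × ℝ) : psi z = 0 ↔ 0 ≤ z.2 ∧ z.2 ≤ 1 := by
  unfold psi
  constructor
  · intro h
    rcases le_or_gt (max (max (-z.2) (z.2 - 1)) 0) 1 with hle | hlt
    · rw [min_eq_left hle] at h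
      have h1 : -z.2 ≤ 0 := le_trans (le_max_left _ _) (le_trans (le_max_left _ _) h.le)
      have h2 : z.2 - 1 ≤ 0 := le_trans (le_max_right _ _) (le_trans (le_max_left _ _) h.le)
      constructor <;> linarith
    · rw [min_eq_right hlt.le] at h; linarith
  · rintro ⟨h0, h1⟩
    have : max (max (-z.2) (z.2 - 1)) 0 = 0 := by
      rw [max_eq_right]
      exact max_le (by linarith) (by linarith)
    rw [this, min_eq_left zero_le_one]

lemma psi_eq_zero (z : ℕ × ℝ) (h0 : 0 ≤ z.2) (h1 : z.2 ≤ 1) : psi z = 0 :=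
  (psi_eq_zero_iff z).mpr ⟨h0, h1⟩

lemma headW_abs_le (r s K : ℕ) (z : ℕ × ℝ) : ‖headW r s K z‖ ≤ ‖W r s z‖ := by
  unfold headW W
  rw [Real.norm_eq_abs, Real.norm_eq_abs, abs_mul, abs_mul]
  apply mul_le_mul_of_nonneg_right _ (abs_nonneg _)
  split_ifs
  · exact le_refl _
  · simp

lemma xW_bound (r s n : ℕ) (z : ℕ × ℝ) (hx : z.1 ≤ n) (h0 : 0 ≤ z.2) (h1 : z.2 ≤ 1) :
    ‖(z.1 : ℝ) * (z.1.descFactorial r : ℝ) * z.2 ^ s‖ ≤ (n : ℝ) * (n : ℝ) ^ r := by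
  rw [Real.norm_eq_abs, abs_of_nonneg (by positivity), mul_assoc]
  have h2 : (z.1 : ℝ) ≤ n := by exact_mod_cast hx
  have h3 : (z.1.descFactorial r : ℝ) * z.2 ^ s ≤ (n : ℝ) ^ r :=
    le_trans (le_abs_self _) (W_bound r s n z hx h0 h1)
  exact mul_le_mul h2 h3 (by positivity) (by positivity)

lemma xW_le (r s K n : ℕ) (z : ℕ × ℝ) (hx : z.1 ≤ n) (h0 : 0 ≤ z.2) :
    (z.1 : ℝ) * (z.1.descFactorial r : ℝ) * z.2 ^ s ≤
      (K : ℝ) * W r s z + (n : ℝ) * tailW r s K z := by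
  unfold W tailW
  have hab : 0 ≤ (z.1.descFactorial r : ℝ) * z.2 ^ s := by positivity
  rcases le_or_gt z.1 K with h | h
  · rw [if_neg (not_lt.mpr h)]
    have hxK : (z.1 : ℝ) ≤ K := by exact_mod_cast h
    nlinarith
  · rw [if_pos h]
    have hxn : (z.1 : ℝ) ≤ n := by exact_mod_cast hx
    have hK0 : (0 : ℝ) ≤ K := Nat.cast_nonneg K
    nlinarith


lemma avg_prob {m : ℕ} (hm : 0 < m) (p : Fin m → Measure (ℕ × ℝ))
    (hp : ∀ k, IsProbabilityMeasure (p k)) : IsProbabilityMeasure (avgMeasure p) := by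
  constructor
  rw [avgMeasure, Measure.smul_apply, smul_eq_mul]
  have h : (∑ k, p k) Set.univ = m := by
    rw [Measure.finset_sum_apply]
    simp [(hp _).measure_univ]
  rw [h]
  exact ENNReal.inv_mul_cancel (by exact_mod_cast hm.ne') (by simp)

lemma avg_null {m : ℕ} (p : Fin m → Measure (ℕ × ℝ)) (t : Set (ℕ × ℝ))
    (hp : ∀ k, p k t = 0) : avgMeasure p t = 0 := by
  rw [avgMeasure, Measure.smul_apply, smul_eq_mul, Measure.finset_sum_apply]
  simp [hp]

lemma avg_integral {m : ℕ} (p : Fin m → Measure (ℕ × ℝ)) (f : ℕ × ℝ → ℝ)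
    (hf : ∀ k, Integrable f (p k)) :
    ∫ z, f z ∂(avgMeasure p) = (m : ℝ)⁻¹ * ∑ k, ∫ z, f z ∂(p k) := by
  rw [avgMeasure, integral_smul_measure, integral_finset_sum_measure (fun k _ => hf k)]
  simp [smul_eq_mul]

lemma valid_ae {n : ℕ} {μ : Measure (ℕ × ℝ)}
    (hnull : μ {z : ℕ × ℝ | z.1 ≤ n ∧ 0 ≤ z.2 ∧ z.2 ≤ 1}ᶜ = 0) :
    ∀ᵐ z ∂μ, z.1 ≤ n ∧ 0 ≤ z.2 ∧ z.2 ≤ 1 := by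
  rw [ae_iff]
  convert hnull using 2
  rfl

lemma integrable_of_valid {n : ℕ} {μ : Measure (ℕ × ℝ)} (hμ : IsProbabilityMeasure μ)
    (hnull : μ {z : ℕ × ℝ | z.1 ≤ n ∧ 0 ≤ z.2 ∧ z.2 ≤ 1}ᶜ = 0)
    (f : ℕ × ℝ → ℝ) (C : ℝ) (hf : Continuous f)
    (hb : ∀ z : ℕ × ℝ, z.1 ≤ n → 0 ≤ z.2 → z.2 ≤ 1 → ‖f z‖ ≤ C) : Integrable f μ := by
  haveI := hμ
  apply (integrable_const C).mono' hf.aestronglyMeasurable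
  filter_upwards [valid_ae hnull] with z hz
  exact hb z hz.1 hz.2.1 hz.2.2

lemma integrable_bounded {μ : Measure (ℕ × ℝ)} (hμ : IsProbabilityMeasure μ)
    (f : ℕ × ℝ → ℝ) (C : ℝ) (hf : Continuous f) (hb : ∀ z, ‖f z‖ ≤ C) :
    Integrable f μ := by
  haveI := hμ
  exact (integrable_const C).mono' hf.aestronglyMeasurable (ae_of_all _ hb)


end CMNeg

set_option maxHeartbeats 2000000 in
/-- **Lemma (cross moments are negligible).**
If `P_n → P` weakly and `(P_n)_{rs} → (P)_{rs} < ∞`, then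
`μ⁽ⁿ⁾_{10,rs} = o(m_n (n)_r⁻¹)` and `(P_n)_{10,rs} = o(n)`, where
`μ⁽ⁿ⁾_{10,rs} = ∑ₖ (E[Xₖ]/n) (E[(Xₖ)_r Yₖ^s]/(n)_r)` and
`(P_n)_{10,rs} = ∫ x (x)_r y^s dP_n`. -/
theorem cross_moment_negligible
    (m : ℕ → ℕ) (hm : ∀ n, 0 < m n)
    (p : ∀ n, Fin (m n) → Measure (ℕ × ℝ))
    (hvalid : ∀ n k, ValidTypes n (p n k))
    (r s : ℕ) (P : Measure (ℕ × ℝ)) (hP : IsProbabilityMeasure P)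
    (hweak : WeakConvNR (fun n => avgMeasure (p n)) P)
    (hint : Integrable (fun ty : ℕ × ℝ => (ty.1.descFactorial r : ℝ) * ty.2 ^ s) P)
    (hmom : Tendsto (fun n => crossMoment (avgMeasure (p n)) r s) atTop
      (𝓝 (crossMoment P r s))) :
    Tendsto
        (fun n =>
          (∑ k : Fin (m n),
              ((∫ ty, (ty.1 : ℝ) ∂(p n k)) / (n : ℝ)) *
                ((∫ ty, (ty.1.descFactorial r : ℝ) * ty.2 ^ s ∂(p n k)) /
                  (n.descFactorial r : ℝ))) /
            ((m n : ℝ) / (n.descFactorial r : ℝ)))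
        atTop (𝓝 0) ∧
      Tendsto
        (fun n =>
          (∫ ty, (ty.1 : ℝ) * (ty.1.descFactorial r : ℝ) * ty.2 ^ s
              ∂(avgMeasure (p n))) / (n : ℝ))
        atTop (𝓝 0) := by
  classical
  have hprob : ∀ n k, IsProbabilityMeasure (p n k) := fun n k => (hvalid n k).1
  have hnull : ∀ n k, p n k {z : ℕ × ℝ | z.1 ≤ n ∧ 0 ≤ z.2 ∧ z.2 ≤ 1}ᶜ = 0 :=
    fun n k => (hvalid n k).2
  have hQprob : ∀ n, IsProbabilityMeasure (avgMeasure (p n)) :=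
    fun n => CMNeg.avg_prob (hm n) _ (hprob n)
  have hQnull : ∀ n, avgMeasure (p n) {z : ℕ × ℝ | z.1 ≤ n ∧ 0 ≤ z.2 ∧ z.2 ≤ 1}ᶜ = 0 :=
    fun n => CMNeg.avg_null _ _ (fun k => hnull n k)
  have hQae : ∀ n, ∀ᵐ z ∂(avgMeasure (p n)), z.1 ≤ n ∧ 0 ≤ z.2 ∧ z.2 ≤ 1 :=
    fun n => CMNeg.valid_ae (hQnull n)
  have hpae : ∀ n k, ∀ᵐ z ∂(p n k), z.1 ≤ n ∧ 0 ≤ z.2 ∧ z.2 ≤ 1 :=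
    fun n k => CMNeg.valid_ae (hnull n k)
  -- integrability package for valid measures
  have hIW : ∀ (n : ℕ) (μ : Measure (ℕ × ℝ)), IsProbabilityMeasure μ →
      μ {z : ℕ × ℝ | z.1 ≤ n ∧ 0 ≤ z.2 ∧ z.2 ≤ 1}ᶜ = 0 → Integrable (CMNeg.W r s) μ :=
    fun n μ h1 h2 => CMNeg.integrable_of_valid h1 h2 _ ((n : ℝ) ^ r) (CMNeg.contW r s)
      (fun z hx h0 h1' => CMNeg.W_bound r s n z hx h0 h1')
  have hIHead : ∀ (n K : ℕ) (μ : Measure (ℕ × ℝ)), IsProbabilityMeasure μ →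
      μ {z : ℕ × ℝ | z.1 ≤ n ∧ 0 ≤ z.2 ∧ z.2 ≤ 1}ᶜ = 0 →
      Integrable (CMNeg.headW r s K) μ :=
    fun n K μ h1 h2 => CMNeg.integrable_of_valid h1 h2 _ ((n : ℝ) ^ r)
      (CMNeg.cont_headW r s K)
      (fun z hx h0 h1' => le_trans (CMNeg.headW_abs_le r s K z) (CMNeg.W_bound r s n z hx h0 h1'))
  have hITail : ∀ (n K : ℕ) (μ : Measure (ℕ × ℝ)), IsProbabilityMeasure μ →
      μ {z : ℕ × ℝ | z.1 ≤ n ∧ 0 ≤ z.2 ∧ z.2 ≤ 1}ᶜ = 0 →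
      Integrable (CMNeg.tailW r s K) μ :=
    fun n K μ h1 h2 => CMNeg.integrable_of_valid h1 h2 _ ((n : ℝ) ^ r)
      (CMNeg.cont_tailW r s K)
      (fun z hx h0 h1' => le_trans (CMNeg.tailW_abs_le r s K z) (CMNeg.W_bound r s n z hx h0 h1'))
  have hIX : ∀ (n : ℕ) (μ : Measure (ℕ × ℝ)), IsProbabilityMeasure μ →
      μ {z : ℕ × ℝ | z.1 ≤ n ∧ 0 ≤ z.2 ∧ z.2 ≤ 1}ᶜ = 0 →
      Integrable (fun z : ℕ × ℝ => (z.1 : ℝ)) μ :=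
    fun n μ h1 h2 => CMNeg.integrable_of_valid h1 h2 _ ((n : ℝ))
      (CMNeg.cont_fst (fun x => (x : ℝ)))
      (fun z hx _ _ => by
        rw [Real.norm_eq_abs, abs_of_nonneg (by positivity)]; exact_mod_cast hx)
  -- P gives full mass to y ∈ [0,1]
  have hPy : ∀ᵐ z ∂P, 0 ≤ z.2 ∧ z.2 ≤ 1 := by
    have hb : ∀ z, |CMNeg.psi z| ≤ 1 := fun z =>
      abs_le.mpr ⟨by linarith [CMNeg.psi_nonneg z], CMNeg.psi_le_one z⟩
    have hpsiQ : ∀ n, ∫ z, CMNeg.psi z ∂(avgMeasure (p n)) = 0 := by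
      intro n
      apply integral_eq_zero_of_ae
      filter_upwards [hQae n] with z hz
      exact CMNeg.psi_eq_zero z hz.2.1 hz.2.2
    have h1 := hweak CMNeg.psi CMNeg.cont_psi ⟨1, hb⟩
    have h2 : Tendsto (fun n => ∫ z, CMNeg.psi z ∂(avgMeasure (p n))) atTop (𝓝 0) := by
      simp only [hpsiQ]; exact tendsto_const_nhds
    have hpsiP : ∫ z, CMNeg.psi z ∂P = 0 := tendsto_nhds_unique h1 h2
    have hintpsi : Integrable CMNeg.psi P :=
      CMNeg.integrable_bounded hP _ 1 CMNeg.cont_psi (fun z => by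
        rw [Real.norm_eq_abs]; exact hb z)
    have h := (integral_eq_zero_iff_of_nonneg (fun z => CMNeg.psi_nonneg z) hintpsi).mp hpsiP
    filter_upwards [h] with z hz
    exact (CMNeg.psi_eq_zero_iff z).mp hz
  -- tail of P vanishes
  have hPtail : Tendsto (fun K => ∫ z, CMNeg.tailW r s K z ∂P) atTop (𝓝 0) := by
    have h := tendsto_integral_filter_of_dominated_convergence (μ := P)
      (F := fun K => CMNeg.tailW r s K) (f := fun _ => (0 : ℝ))
      (bound := fun z => ‖CMNeg.W r s z‖)
      (Eventually.of_forall fun K => (CMNeg.cont_tailW r s K).aestronglyMeasurable)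
      (Eventually.of_forall fun K => ae_of_all _ fun z => CMNeg.tailW_abs_le r s K z)
      hint.norm
      (ae_of_all _ fun z => by
        apply tendsto_const_nhds.congr'
        filter_upwards [eventually_ge_atTop z.1] with K hK
        simp [CMNeg.tailW, not_lt.mpr hK])
    simpa using h
  -- x-tail of P vanishes
  have hPchi : Tendsto (fun L => ∫ z, CMNeg.chi L z ∂P) atTop (𝓝 0) := by
    have h := tendsto_integral_filter_of_dominated_convergence (μ := P)
      (F := fun L => CMNeg.chi L) (f := fun _ => (0 : ℝ))
      (bound := fun _ => (1 : ℝ))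
      (Eventually.of_forall fun L => (CMNeg.cont_chi L).aestronglyMeasurable)
      (Eventually.of_forall fun L => ae_of_all _ fun z => by
        simp only [CMNeg.chi]; split_ifs <;> simp)
      (integrable_const 1)
      (ae_of_all _ fun z => by
        apply tendsto_const_nhds.congr'
        filter_upwards [eventually_ge_atTop z.1] with L hL
        simp [CMNeg.chi, not_lt.mpr hL])
    simpa using h
  -- tail integrals over Q_n converge to tail integral over P
  have hsplitQ : ∀ (K n : ℕ), crossMoment (avgMeasure (p n)) r s =
      (∫ z, CMNeg.headW r s K z ∂(avgMeasure (p n))) +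
        ∫ z, CMNeg.tailW r s K z ∂(avgMeasure (p n)) := by
    intro K n
    have : crossMoment (avgMeasure (p n)) r s =
        ∫ z, (CMNeg.headW r s K z + CMNeg.tailW r s K z) ∂(avgMeasure (p n)) := by
      apply integral_congr_ae
      exact ae_of_all _ fun z => CMNeg.W_split r s K z
    rw [this, integral_add (hIHead n K _ (hQprob n) (hQnull n)) (hITail n K _ (hQprob n) (hQnull n))]
  have hIHeadP : ∀ K, Integrable (CMNeg.headW r s K) P := fun K =>
    hint.norm.mono' (CMNeg.cont_headW r s K).aestronglyMeasurable
      (ae_of_all _ fun z => CMNeg.headW_abs_le r s K z)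
  have hITailP : ∀ K, Integrable (CMNeg.tailW r s K) P := fun K =>
    hint.norm.mono' (CMNeg.cont_tailW r s K).aestronglyMeasurable
      (ae_of_all _ fun z => CMNeg.tailW_abs_le r s K z)
  have hsplitP : ∀ K : ℕ, crossMoment P r s =
      (∫ z, CMNeg.headW r s K z ∂P) + ∫ z, CMNeg.tailW r s K z ∂P := by
    intro K
    have : crossMoment P r s = ∫ z, (CMNeg.headW r s K z + CMNeg.tailW r s K z) ∂P := by
      apply integral_congr_ae
      exact ae_of_all _ fun z => CMNeg.W_split r s K z
    rw [this, integral_add (hIHeadP K) (hITailP K)]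
  have hphiQ : ∀ (K n : ℕ), ∫ z, CMNeg.phiK r s K z ∂(avgMeasure (p n)) =
      ∫ z, CMNeg.headW r s K z ∂(avgMeasure (p n)) := by
    intro K n
    apply integral_congr_ae
    filter_upwards [hQae n] with z hz
    exact CMNeg.phiK_eq r s K z hz.2.1 hz.2.2
  have hphiP : ∀ K : ℕ, ∫ z, CMNeg.phiK r s K z ∂P = ∫ z, CMNeg.headW r s K z ∂P := by
    intro K
    apply integral_congr_ae
    filter_upwards [hPy] with z hz
    exact CMNeg.phiK_eq r s K z hz.1 hz.2
  have hTendTail : ∀ K : ℕ, Tendsto (fun n => ∫ z, CMNeg.tailW r s K z ∂(avgMeasure (p n)))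
      atTop (𝓝 (∫ z, CMNeg.tailW r s K z ∂P)) := by
    intro K
    have h1 := hweak (CMNeg.phiK r s K) (CMNeg.cont_phiK r s K) ⟨(K : ℝ) ^ r, CMNeg.phiK_bound r s K⟩
    have h2 := hmom.sub h1
    have heq : ∀ n, crossMoment (avgMeasure (p n)) r s -
        (∫ z, CMNeg.phiK r s K z ∂(avgMeasure (p n))) =
        ∫ z, CMNeg.tailW r s K z ∂(avgMeasure (p n)) := by
      intro n; rw [hphiQ K n, hsplitQ K n]; ring
    have heqP : crossMoment P r s - (∫ z, CMNeg.phiK r s K z ∂P) =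
        ∫ z, CMNeg.tailW r s K z ∂P := by
      rw [hphiP K, hsplitP K]; ring
    rw [← heqP]
    exact h2.congr heq
  -- x-tail over Q_n converges
  have hTendChi : ∀ L : ℕ, Tendsto (fun n => ∫ z, CMNeg.chi L z ∂(avgMeasure (p n)))
      atTop (𝓝 (∫ z, CMNeg.chi L z ∂P)) := by
    intro L
    apply hweak (CMNeg.chi L) (CMNeg.cont_chi L)
    exact ⟨1, fun z => by simp only [CMNeg.chi]; split_ifs <;> simp⟩
  -- first moment over Q_n is o(n)
  have hXnonneg : ∀ n : ℕ, 0 ≤ (∫ z, (z.1 : ℝ) ∂(avgMeasure (p n))) / (n : ℝ) := by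
    intro n
    apply div_nonneg _ (Nat.cast_nonneg n)
    exact integral_nonneg fun z => Nat.cast_nonneg _
  have hX : Tendsto (fun n => (∫ z, (z.1 : ℝ) ∂(avgMeasure (p n))) / (n : ℝ)) atTop (𝓝 0) := by
    rw [NormedAddCommGroup.tendsto_nhds_zero]
    intro ε hε
    obtain ⟨L, hL⟩ := (hPchi.eventually_lt_const (by linarith : (0:ℝ) < ε/3)).exists
    have ev1 : ∀ᶠ n in atTop, ∫ z, CMNeg.chi L z ∂(avgMeasure (p n)) < ε / 3 :=
      (hTendChi L).eventually_lt_const hL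
    have ev2 : ∀ᶠ n : ℕ in atTop, (L : ℝ) / (n : ℝ) < ε / 3 :=
      (tendsto_const_div_atTop_nhds_zero_nat (L : ℝ)).eventually_lt_const (by linarith)
    filter_upwards [ev1, ev2, eventually_ge_atTop 1] with n h1 h2 h3
    have hn : (0 : ℝ) < n := by exact_mod_cast h3
    have hchi_nonneg : 0 ≤ ∫ z, CMNeg.chi L z ∂(avgMeasure (p n)) :=
      integral_nonneg fun z => by simp only [CMNeg.chi]; split_ifs <;> simp
    have hmono : ∫ z, (z.1 : ℝ) ∂(avgMeasure (p n)) ≤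
        ∫ z, ((L : ℝ) + (n : ℝ) * CMNeg.chi L z) ∂(avgMeasure (p n)) := by
      apply integral_mono_ae (hIX n _ (hQprob n) (hQnull n))
      · exact (integrable_const _).add
          (((CMNeg.integrable_bounded (hQprob n) _ 1 (CMNeg.cont_chi L)
            (fun z => by simp only [CMNeg.chi]; split_ifs <;> simp)).const_mul _))
      · filter_upwards [hQae n] with z hz
        simp only [CMNeg.chi]
        split_ifs with hlt
        · have : (z.1 : ℝ) ≤ n := by exact_mod_cast hz.1
          linarith [Nat.cast_nonneg (α := ℝ) L]
        · have : (z.1 : ℝ) ≤ L := by exact_mod_cast not_lt.mp hlt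
          linarith
    rw [integral_add (integrable_const _)
      ((CMNeg.integrable_bounded (hQprob n) _ 1 (CMNeg.cont_chi L)
        (fun z => by simp only [CMNeg.chi]; split_ifs <;> simp)).const_mul _),
      integral_const] at hmono
    haveI := hQprob n
    simp only [measure_univ, probReal_univ, ENNReal.toReal_one, smul_eq_mul, one_mul] at hmono
    rw [integral_const_mul] at hmono
    have hXle : (∫ z, (z.1 : ℝ) ∂(avgMeasure (p n))) / (n : ℝ) ≤
        (L : ℝ) / (n : ℝ) + ∫ z, CMNeg.chi L z ∂(avgMeasure (p n)) := by
      rw [div_add' _ _ _ hn.ne', div_le_div_iff_of_pos_right hn]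
      calc ∫ z, (z.1 : ℝ) ∂(avgMeasure (p n)) ≤
          (L : ℝ) + (n : ℝ) * ∫ z, CMNeg.chi L z ∂(avgMeasure (p n)) := hmono
        _ = (L : ℝ) + (∫ z, CMNeg.chi L z ∂(avgMeasure (p n))) * (n : ℝ) := by ring
    rw [Real.norm_eq_abs, abs_of_nonneg (hXnonneg n)]
    calc (∫ z, (z.1 : ℝ) ∂(avgMeasure (p n))) / (n : ℝ) ≤
        (L : ℝ) / (n : ℝ) + ∫ z, CMNeg.chi L z ∂(avgMeasure (p n)) := hXle
      _ < ε / 3 + ε / 3 := by linarith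
      _ < ε := by linarith
  constructor
  · -- Goal 1
    rw [NormedAddCommGroup.tendsto_nhds_zero]
    intro ε hε
    obtain ⟨K, hK⟩ := (hPtail.eventually_lt_const (by linarith : (0:ℝ) < ε/3)).exists
    have ev1 := (hTendTail K).eventually_lt_const hK
    have hKr1 : (0:ℝ) < (K:ℝ)^r + 1 := by positivity
    have ev2 : ∀ᶠ n in atTop,
        (∫ z, (z.1 : ℝ) ∂(avgMeasure (p n))) / (n : ℝ) < ε/(3*((K:ℝ)^r+1)) :=
      hX.eventually_lt_const (by positivity)
    filter_upwards [ev1, ev2, eventually_ge_atTop 1, eventually_ge_atTop r]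
      with n h1 h2 h3 h4
    have hn : (0:ℝ) < n := by exact_mod_cast h3
    have hmn : (0:ℝ) < m n := by exact_mod_cast hm n
    have hdne : n.descFactorial r ≠ 0 := by
      rw [Ne, Nat.descFactorial_eq_zero_iff_lt]; omega
    have hd : (0:ℝ) < (n.descFactorial r : ℝ) := by
      exact_mod_cast Nat.pos_of_ne_zero hdne
    set A : Fin (m n) → ℝ := fun k => ∫ ty, (ty.1 : ℝ) ∂(p n k) with hA
    set Bk : Fin (m n) → ℝ :=
      fun k => ∫ ty, (ty.1.descFactorial r : ℝ) * ty.2 ^ s ∂(p n k) with hBk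
    have hrew1 : ∑ k, (A k/(n:ℝ))*(Bk k/(n.descFactorial r : ℝ)) =
        (∑ k, A k * Bk k)/((n:ℝ)*(n.descFactorial r : ℝ)) := by
      rw [Finset.sum_div]
      exact Finset.sum_congr rfl fun k _ => by rw [div_mul_div_comm]
    have hrew2 : (∑ k, A k * Bk k)/((n:ℝ)*(n.descFactorial r : ℝ)) /
        ((m n : ℝ)/(n.descFactorial r : ℝ)) = (∑ k, A k * Bk k)/((n:ℝ)*(m n : ℝ)) := by
      field_simp
    have hAnn : ∀ k, 0 ≤ A k := fun k => integral_nonneg fun z => Nat.cast_nonneg _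
    have hAle : ∀ k, A k ≤ (n:ℝ) := by
      intro k
      haveI := hprob n k
      have hmono := integral_mono_ae (hIX n _ (hprob n k) (hnull n k))
        (integrable_const (n:ℝ))
        (by filter_upwards [hpae n k] with z hz; exact_mod_cast hz.1)
      simpa [integral_const, measure_univ] using hmono
    have hBsplit : ∀ k, Bk k = (∫ z, CMNeg.headW r s K z ∂(p n k)) +
        ∫ z, CMNeg.tailW r s K z ∂(p n k) := by
      intro k
      have hcongr : Bk k = ∫ z, (CMNeg.headW r s K z + CMNeg.tailW r s K z) ∂(p n k) := by
        rw [hBk]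
        exact integral_congr_ae (ae_of_all _ fun z => CMNeg.W_split r s K z)
      rw [hcongr, integral_add (hIHead n K _ (hprob n k) (hnull n k))
        (hITail n K _ (hprob n k) (hnull n k))]
    have hHle : ∀ k, (∫ z, CMNeg.headW r s K z ∂(p n k)) ≤ (K:ℝ)^r := by
      intro k
      haveI := hprob n k
      have hmono := integral_mono_ae (hIHead n K _ (hprob n k) (hnull n k))
        (integrable_const ((K:ℝ)^r))
        (by filter_upwards [hpae n k] with z hz
            exact CMNeg.headW_bound r s K z hz.2.1 hz.2.2)
      simpa [integral_const, measure_univ] using hmono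
    have hHnn : ∀ k, 0 ≤ ∫ z, CMNeg.headW r s K z ∂(p n k) := by
      intro k
      apply integral_nonneg_of_ae
      filter_upwards [hpae n k] with z hz
      exact CMNeg.headW_nonneg r s K z hz.2.1
    have hTnn : ∀ k, 0 ≤ ∫ z, CMNeg.tailW r s K z ∂(p n k) := by
      intro k
      apply integral_nonneg_of_ae
      filter_upwards [hpae n k] with z hz
      exact CMNeg.tailW_nonneg r s K z hz.2.1
    have hprod : ∀ k, A k * Bk k ≤
        (K:ℝ)^r * A k + (n:ℝ) * ∫ z, CMNeg.tailW r s K z ∂(p n k) := by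
      intro k
      rw [hBsplit k]
      have e1 : A k * (∫ z, CMNeg.headW r s K z ∂(p n k)) ≤ A k * (K:ℝ)^r :=
        mul_le_mul_of_nonneg_left (hHle k) (hAnn k)
      have e2 : A k * (∫ z, CMNeg.tailW r s K z ∂(p n k)) ≤
          (n:ℝ) * ∫ z, CMNeg.tailW r s K z ∂(p n k) :=
        mul_le_mul_of_nonneg_right (hAle k) (hTnn k)
      nlinarith
    have hsum : (∑ k, A k * Bk k) ≤
        (K:ℝ)^r * (∑ k, A k) + (n:ℝ) * ∑ k, ∫ z, CMNeg.tailW r s K z ∂(p n k) := by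
      calc (∑ k, A k * Bk k) ≤
          ∑ k, ((K:ℝ)^r * A k + (n:ℝ) * ∫ z, CMNeg.tailW r s K z ∂(p n k)) :=
            Finset.sum_le_sum fun k _ => hprod k
        _ = _ := by rw [Finset.sum_add_distrib, ← Finset.mul_sum, ← Finset.mul_sum]
    have hsumA : ∫ z, (z.1 : ℝ) ∂(avgMeasure (p n)) = (m n : ℝ)⁻¹ * ∑ k, A k :=
      CMNeg.avg_integral _ _ (fun k => hIX n _ (hprob n k) (hnull n k))
    have hsumT : ∫ z, CMNeg.tailW r s K z ∂(avgMeasure (p n)) =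
        (m n : ℝ)⁻¹ * ∑ k, ∫ z, CMNeg.tailW r s K z ∂(p n k) :=
      CMNeg.avg_integral _ _ (fun k => hITail n K _ (hprob n k) (hnull n k))
    rw [hrew1, hrew2]
    have hnum_nn : 0 ≤ ∑ k, A k * Bk k :=
      Finset.sum_nonneg fun k _ => mul_nonneg (hAnn k)
        (by rw [hBsplit k]; exact add_nonneg (hHnn k) (hTnn k))
    rw [Real.norm_eq_abs, abs_of_nonneg (div_nonneg hnum_nn (by positivity))]
    have step1 : (∑ k, A k * Bk k)/((n:ℝ)*(m n : ℝ)) ≤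
        ((K:ℝ)^r * (∑ k, A k) + (n:ℝ) * ∑ k, ∫ z, CMNeg.tailW r s K z ∂(p n k)) /
          ((n:ℝ)*(m n : ℝ)) :=
      (div_le_div_iff_of_pos_right (by positivity)).mpr hsum
    have step2 : ((K:ℝ)^r * (∑ k, A k) + (n:ℝ) * ∑ k, ∫ z, CMNeg.tailW r s K z ∂(p n k)) /
          ((n:ℝ)*(m n : ℝ)) =
        (K:ℝ)^r * (((m n : ℝ)⁻¹ * ∑ k, A k)/(n:ℝ)) +
          (m n : ℝ)⁻¹ * ∑ k, ∫ z, CMNeg.tailW r s K z ∂(p n k) := by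
      field_simp
    rw [← hsumA] at step2
    rw [← hsumT] at step2
    have step3 : (K:ℝ)^r * ((∫ z, (z.1 : ℝ) ∂(avgMeasure (p n)))/(n:ℝ)) ≤
        (K:ℝ)^r * (ε/(3*((K:ℝ)^r+1))) :=
      mul_le_mul_of_nonneg_left h2.le (by positivity)
    have step4 : (K:ℝ)^r * (ε/(3*((K:ℝ)^r+1))) ≤ ε/3 := by
      rw [mul_div_assoc', div_le_div_iff₀ (by positivity) (by norm_num : (0:ℝ) < 3)]
      nlinarith [pow_nonneg (Nat.cast_nonneg (α := ℝ) K) r]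
    calc (∑ k, A k * Bk k)/((n:ℝ)*(m n : ℝ)) ≤ _ := step1
      _ = _ := step2
      _ < ε/3 + ε/3 := by
          have := lt_of_le_of_lt (le_trans step3 step4) (by linarith : ε/3 < ε/3 + 1)
          linarith [le_trans step3 step4, h1]
      _ < ε := by linarith
  · -- Goal 2
    rw [NormedAddCommGroup.tendsto_nhds_zero]
    intro ε hε
    obtain ⟨K, hK⟩ := (hPtail.eventually_lt_const (by linarith : (0:ℝ) < ε/3)).exists
    have ev1 := (hTendTail K).eventually_lt_const hK
    set B : ℝ := |crossMoment P r s| + 1 with hBdef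
    have hBpos : 0 < B := by positivity
    have ev2 : ∀ᶠ n in atTop, crossMoment (avgMeasure (p n)) r s < B :=
      hmom.eventually_lt_const (by rw [hBdef]; linarith [le_abs_self (crossMoment P r s)])
    have ev3 : ∀ᶠ n : ℕ in atTop, (K:ℝ) * B / (n:ℝ) < ε/3 :=
      (tendsto_const_div_atTop_nhds_zero_nat ((K:ℝ)*B)).eventually_lt_const (by linarith)
    filter_upwards [ev1, ev2, ev3, eventually_ge_atTop 1] with n h1 h2 h3 h4
    have hn : (0:ℝ) < n := by exact_mod_cast h4
    have hnum_nonneg : 0 ≤ ∫ ty, (ty.1 : ℝ) * (ty.1.descFactorial r : ℝ) * ty.2 ^ s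
        ∂(avgMeasure (p n)) := by
      apply integral_nonneg_of_ae
      filter_upwards [hQae n] with z hz
      have h0 := hz.2.1
      positivity
    have hIf2 : Integrable
        (fun ty : ℕ × ℝ => (ty.1 : ℝ) * (ty.1.descFactorial r : ℝ) * ty.2 ^ s)
        (avgMeasure (p n)) :=
      CMNeg.integrable_of_valid (hQprob n) (hQnull n) _ ((n:ℝ) * (n:ℝ)^r)
        (((CMNeg.cont_fst fun x => (x:ℝ)).mul
          (CMNeg.cont_fst fun x => (x.descFactorial r : ℝ))).mul
            ((continuous_pow s).comp continuous_snd))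
        (fun z hx h0 h1' => CMNeg.xW_bound r s n z hx h0 h1')
    have hmono : (∫ ty, (ty.1 : ℝ) * (ty.1.descFactorial r : ℝ) * ty.2 ^ s
          ∂(avgMeasure (p n))) ≤
        (K:ℝ) * crossMoment (avgMeasure (p n)) r s +
          (n:ℝ) * ∫ z, CMNeg.tailW r s K z ∂(avgMeasure (p n)) := by
      have hstep : (∫ ty, (ty.1 : ℝ) * (ty.1.descFactorial r : ℝ) * ty.2 ^ s
            ∂(avgMeasure (p n))) ≤
          ∫ z, ((K:ℝ) * CMNeg.W r s z + (n:ℝ) * CMNeg.tailW r s K z)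
            ∂(avgMeasure (p n)) := by
        apply integral_mono_ae hIf2
        · exact ((hIW n _ (hQprob n) (hQnull n)).const_mul _).add
            ((hITail n K _ (hQprob n) (hQnull n)).const_mul _)
        · filter_upwards [hQae n] with z hz
          exact CMNeg.xW_le r s K n z hz.1 hz.2.1
      rwa [integral_add ((hIW n _ (hQprob n) (hQnull n)).const_mul _)
        ((hITail n K _ (hQprob n) (hQnull n)).const_mul _),
        integral_const_mul, integral_const_mul] at hstep
    have e1 : (K:ℝ) * crossMoment (avgMeasure (p n)) r s ≤ (K:ℝ) * B :=
      mul_le_mul_of_nonneg_left h2.le (Nat.cast_nonneg K)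
    have e2 : (K:ℝ) * B < ε/3 * n := by rwa [div_lt_iff₀ hn] at h3
    have e3 : (n:ℝ) * (∫ z, CMNeg.tailW r s K z ∂(avgMeasure (p n))) <
        (n:ℝ) * (ε/3) := by
      exact mul_lt_mul_of_pos_left h1 hn
    rw [Real.norm_eq_abs, abs_of_nonneg (div_nonneg hnum_nonneg hn.le), div_lt_iff₀ hn]
    nlinarith [mul_pos hε hn]

end
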